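/- Let S ≥ 1 and K be integers with e²·S ≤ K, and set α = 1 − 1/ln(K/S). Then α ≥ 1/2 and (K^{1−α} − 1)·S^α / (α(1−α)) ≤ 6·S·ln(K/S). -/
import Mathlib


/-- **Remark 1 (known sparsity `S`).** For integers `S ≥ 1`, `K` with
`e²·S ≤ K` and `α = 1 − 1/ln(K/S)`: `α ≥ 1/2` and
`(K^{1−α} − 1)·S^α/(α(1−α)) ≤ 6·S·ln(K/S)`. -/
theorem stmt19 (S K : ℕ) (hS : 1 ≤ S)
    (hSK : Real.exp 2 * (S : ℝ) ≤ (K : ℝ))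
    (α : ℝ) (hα : α = 1 - 1 / Real.log ((K : ℝ) / S)) :
    1 / 2 ≤ α ∧
    ((K : ℝ) ^ (1 - α) - 1) * (S : ℝ) ^ α / (α * (1 - α)) ≤
      6 * S * Real.log ((K : ℝ) / S) := by
  have hS1 : (1:ℝ) ≤ S := by exact_mod_cast hS
  have hSpos : (0:ℝ) < S := by linarith
  have hexp2 : (1:ℝ) ≤ Real.exp 2 := Real.one_le_exp (by norm_num)
  have hK1 : (1:ℝ) ≤ K := by nlinarith
  have hKpos : (0:ℝ) < K := by linarith
  have hKS : Real.exp 2 ≤ (K:ℝ)/S := (le_div_iff₀ hSpos).mpr hSK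
  set L := Real.log ((K:ℝ)/S) with hLdef
  have hL : 2 ≤ L := by
    have h := Real.log_le_log (Real.exp_pos 2) hKS
    simpa [Real.log_exp] using h
  have hLpos : 0 < L := by linarith
  have hLne : L ≠ 0 := ne_of_gt hLpos
  have hαhalf : 1/2 ≤ α := by
    rw [hα]
    have h1 : 1/L ≤ 1/2 := one_div_le_one_div_of_le two_pos hL
    linarith
  refine ⟨hαhalf, ?_⟩
  have h1α : 1 - α = 1/L := by rw [hα]; ring
  have hlogK : Real.log K = L + Real.log S := by
    rw [hLdef, Real.log_div (ne_of_gt hKpos) (ne_of_gt hSpos)]; ring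
  have hprod : (K:ℝ) ^ (1-α) * (S:ℝ) ^ α = Real.exp 1 * S := by
    rw [Real.rpow_def_of_pos hKpos, Real.rpow_def_of_pos hSpos, ← Real.exp_add]
    have : Real.log K * (1-α) + Real.log S * α = 1 + Real.log S := by
      rw [hlogK, hα]; field_simp; ring
    rw [this, Real.exp_add, Real.exp_log hSpos]
  have hSαpos : (0:ℝ) < (S:ℝ) ^ α := Real.rpow_pos_of_pos hSpos α
  have hz : (0:ℝ) ≤ 1 - α := by rw [h1α]; positivity
  have hK1α : (1:ℝ) ≤ (K:ℝ) ^ (1-α) := by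
    have := Real.rpow_le_rpow (by norm_num) hK1 hz
    simpa using this
  have hNnn : 0 ≤ ((K:ℝ) ^ (1-α) - 1) * (S:ℝ) ^ α := by nlinarith
  have hNle : ((K:ℝ) ^ (1-α) - 1) * (S:ℝ) ^ α ≤ Real.exp 1 * S := by nlinarith
  have hdenom : 1/(2*L) ≤ α * (1-α) := by
    rw [h1α]
    have h2 : (1:ℝ)/(2*L) = (1/2)*(1/L) := by ring
    rw [h2]
    exact mul_le_mul_of_nonneg_right hαhalf (by positivity)
  have hden2 : (0:ℝ) < 1/(2*L) := by positivity
  calc ((K:ℝ) ^ (1-α) - 1) * (S:ℝ) ^ α / (α * (1-α))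
      ≤ ((K:ℝ) ^ (1-α) - 1) * (S:ℝ) ^ α / (1/(2*L)) :=
        div_le_div_of_nonneg_left hNnn hden2 hdenom
    _ = ((K:ℝ) ^ (1-α) - 1) * (S:ℝ) ^ α * (2*L) := by
        rw [div_div_eq_mul_div]; ring
    _ ≤ Real.exp 1 * S * (2*L) := by nlinarith
    _ ≤ 6 * S * L := by nlinarith [Real.exp_one_lt_d9, mul_pos hSpos hLpos]
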